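/- If a circle C intersects each of two disjoint circles C₁ and C₂ (each lying outside the other) at a 90-degree angle, then C passes through both points where the circle orthogonal to C₁ and C₂ centered on the radical axis meets the line of centers O₁O₂. -/

import Mathlib

open Metric

/-- If a circle `C` (center `O`, radius `r`) intersects each of two disjoint
circles `C₁`, `C₂` (each lying outside the other) orthogonally, then `C`
passes through both points where the circle `C₀` — centered at the point `P`
where the radical axis meets the line of centers, with radius the tangent
length from `P` — meets the line of centers `O₁O₂`. -/
theorem orthogonal_circle_passes_through_limit_points
    (O₁ O₂ P O : EuclideanSpace ℝ (Fin 2)) (r₁ r₂ r : ℝ)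
    (hr₁ : 0 < r₁) (hr₂ : 0 < r₂) (hO : O₁ ≠ O₂)
    (hsep : dist O₁ O₂ > r₁ + r₂)
    (hPline : P ∈ affineSpan ℝ ({O₁, O₂} : Set (EuclideanSpace ℝ (Fin 2))))
    (hPrad : dist P O₁ ^ 2 - r₁ ^ 2 = dist P O₂ ^ 2 - r₂ ^ 2)
    (hr : 0 < r)
    (horth₁ : dist O O₁ ^ 2 = r ^ 2 + r₁ ^ 2)
    (horth₂ : dist O O₂ ^ 2 = r ^ 2 + r₂ ^ 2) :
    ∀ X : EuclideanSpace ℝ (Fin 2),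
      X ∈ affineSpan ℝ ({O₁, O₂} : Set (EuclideanSpace ℝ (Fin 2))) →
      dist X P ^ 2 = dist P O₁ ^ 2 - r₁ ^ 2 →
      dist X O = r := by
  intro X hX hX2
  have hP' : P -ᵥ O₁ ∈ (affineSpan ℝ ({O₁, O₂} : Set (EuclideanSpace ℝ (Fin 2)))).direction :=
    AffineSubspace.vsub_mem_direction hPline (left_mem_affineSpan_pair ℝ O₁ O₂)
  have hX' : X -ᵥ O₁ ∈ (affineSpan ℝ ({O₁, O₂} : Set (EuclideanSpace ℝ (Fin 2)))).direction :=
    AffineSubspace.vsub_mem_direction hX (left_mem_affineSpan_pair ℝ O₁ O₂)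
  rw [direction_affineSpan] at hP' hX'
  obtain ⟨u, hu⟩ := mem_vectorSpan_pair_rev.mp hP'
  obtain ⟨s, hs⟩ := mem_vectorSpan_pair_rev.mp hX'
  set v : EuclideanSpace ℝ (Fin 2) := O₂ - O₁ with hv
  set w : EuclideanSpace ℝ (Fin 2) := O - O₁ with hw
  have hPd : P - O₁ = u • v := by
    simp only [vsub_eq_sub] at hu; rw [← hu]
  have hXd : X - O₁ = s • v := by
    simp only [vsub_eq_sub] at hs; rw [← hs]
  set V : ℝ := ‖v‖ ^ 2 with hV
  set a : ℝ := (inner ℝ w v : ℝ) with ha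
  set W : ℝ := ‖w‖ ^ 2 with hW
  have d1 : dist O O₁ ^ 2 = W := by rw [dist_eq_norm, hW, hw]
  have d2 : dist O O₂ ^ 2 = W - 2 * a + V := by
    have h : O - O₂ = w - v := by rw [hw, hv]; abel
    rw [dist_eq_norm, h, @norm_sub_sq_real, ha, hV, hW]
  have d3 : dist P O₁ ^ 2 = u ^ 2 * V := by
    rw [dist_eq_norm, hPd, norm_smul, mul_pow, hV]
    simp [sq_abs]
  have d4 : dist P O₂ ^ 2 = (u - 1) ^ 2 * V := by
    have h : P - O₂ = (u - 1) • v := by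
      rw [sub_smul, one_smul, ← hPd, hv]; abel
    rw [dist_eq_norm, h, norm_smul, mul_pow, hV]
    simp [sq_abs]
  have d5 : dist X P ^ 2 = (s - u) ^ 2 * V := by
    have h : X - P = (s - u) • v := by
      rw [sub_smul, ← hPd, ← hXd]; abel
    rw [dist_eq_norm, h, norm_smul, mul_pow, hV]
    simp [sq_abs]
  have d6 : dist X O ^ 2 = s ^ 2 * V - 2 * s * a + W := by
    have h : X - O = s • v - w := by rw [← hXd, hw]; abel
    have hiv : (inner ℝ v w : ℝ) = a := by rw [ha]; exact real_inner_comm w v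
    rw [dist_eq_norm, h, @norm_sub_sq_real, norm_smul, real_inner_smul_left, hiv,
      Real.norm_eq_abs, mul_pow, sq_abs, hV, hW]
    ring
  clear_value V a W
  rw [d1] at horth₁; rw [d2] at horth₂
  rw [d3, d4] at hPrad
  rw [d5, d3] at hX2
  have e7 : a = u * V := by linear_combination (horth₁ - horth₂ - hPrad) / 2
  have key : dist X O ^ 2 = r ^ 2 := by
    rw [d6, e7, horth₁]; linear_combination hX2
  have h2 := congrArg Real.sqrt key
  rwa [Real.sqrt_sq dist_nonneg, Real.sqrt_sq hr.le] at h2
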